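/- Let A be an integral domain which is a finitely generated ℂ-algebra. Then the maximal spectrum of A is not the union of countably many proper closed subsets: if (Zₙ)_{n∈ℕ} is a countable family of Zariski-closed subsets of the maximal spectrum of A whose union is the whole maximal spectrum, then Zₙ equals the whole maximal spectrum for some n. (This is the key uncountability fact — an irreducible complex variety is not a countable union of proper closed subvarieties — proved and used in the paper's Lemmas 2.1, 2.2 and 2.3 on ind-varieties; it relies on ℂ being uncountable.) -/

import Mathlib

open Cardinal

lemma countable_submonoid_closure {M : Type*} [Monoid M] {s : Set M} (hs : s.Countable) :
    ((Submonoid.closure s : Submonoid M) : Set M).Countable := by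
  haveI := hs.to_subtype
  rw [Submonoid.closure_eq_image_prod]
  refine Set.Countable.image ?_ _
  have h : {l : List M | ∀ x ∈ l, x ∈ s} ⊆
      Set.range (fun l : List s => (l.map (↑) : List M)) := by
    intro l hl
    refine ⟨l.attach.map fun x => ⟨x.1, hl x.1 x.2⟩, ?_⟩
    simp [List.map_map, Function.comp_def]
  exact Set.Countable.mono h (Set.countable_range _)

lemma alg_of_countable_rank (F : Type*) [Field F] [Algebra ℂ F]
    (hrank : Module.rank ℂ F ≤ ℵ₀) : Algebra.IsAlgebraic ℂ F := by
  constructor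
  intro x
  by_contra hx
  have hx' : Transcendental ℂ x := hx
  have h2 := hx'.linearIndependent_sub_inv.cardinal_lift_le_rank
  have h3 := (Cardinal.lift_le.{0}).mpr hrank
  have h4 := h2.trans h3
  rw [mk_complex, Cardinal.lift_aleph0, Cardinal.lift_continuum] at h4
  exact absurd h4 (not_le.mpr aleph0_lt_continuum)

lemma surjective_algebraMap_quot (B : Type*) [CommRing B] [Algebra ℂ B] (m : Ideal B)
    [m.IsMaximal] (h : Module.rank ℂ (B ⧸ m) ≤ ℵ₀) :
    Function.Surjective (algebraMap ℂ (B ⧸ m)) := by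
  letI : Field (B ⧸ m) := Ideal.Quotient.field m
  haveI : Algebra.IsAlgebraic ℂ (B ⧸ m) := alg_of_countable_rank _ h
  exact IsAlgClosed.algebraMap_bijective_of_isIntegral.2

lemma exists_maximal_avoiding (A : Type*) [CommRing A] [IsDomain A] [Algebra ℂ A]
    [Algebra.FiniteType ℂ A] (a : ℕ → A) (ha : ∀ n, a n ≠ 0) :
    ∃ M : Ideal A, M.IsMaximal ∧ ∀ n, a n ∉ M := by
  classical
  set S : Submonoid A := Submonoid.closure (Set.range a) with hSdef
  have hS : S ≤ nonZeroDivisors A := by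
    rw [hSdef, Submonoid.closure_le]
    rintro x ⟨n, rfl⟩
    exact mem_nonZeroDivisors_of_ne_zero (ha n)
  haveI : IsDomain (Localization S) := IsLocalization.isDomain_of_le_nonZeroDivisors (S := Localization S) hS
  obtain ⟨m, hm⟩ := Ideal.exists_maximal (Localization S)
  haveI := hm
  -- countable spanning set of the localization over ℂ
  obtain ⟨s, hs⟩ := (inferInstance : Algebra.FiniteType ℂ A)
  have hA : Submodule.span ℂ ((Submonoid.closure (↑s : Set A) : Submonoid A) : Set A)
      = (⊤ : Submodule ℂ A) := by
    rw [← Algebra.adjoin_eq_span, hs]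
    rfl
  set C : Set A := ((Submonoid.closure (↑s : Set A) : Submonoid A) : Set A) with hCdef
  set f : C × S → Localization S := fun p => Localization.mk p.1.1 p.2 with hfdef
  have hspanB : Submodule.span ℂ (Set.range f) = ⊤ := by
    rw [Submodule.eq_top_iff']
    intro y
    refine Localization.induction_on y ?_
    rintro ⟨x, t⟩
    let g : A →ₗ[ℂ] Localization S :=
      { toFun := fun z => Localization.mk z t
        map_add' := fun z w => (Localization.add_mk_self z t w).symm
        map_smul' := fun c z => by
          rw [RingHom.id_apply, Localization.smul_mk] }
    have hx : x ∈ Submodule.span ℂ C := hA ▸ Submodule.mem_top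
    have : g x ∈ Submodule.map g (Submodule.span ℂ C) := ⟨x, hx, rfl⟩
    rw [Submodule.map_span] at this
    refine Submodule.span_mono ?_ this
    rintro _ ⟨z, hz, rfl⟩
    exact ⟨(⟨z, hz⟩, t), rfl⟩
  have hCcount : Countable C := (countable_submonoid_closure (s.countable_toSet)).to_subtype
  have hScount : Countable S :=
    (countable_submonoid_closure (Set.countable_range a)).to_subtype
  -- rank of the quotient field over ℂ is countable
  let π : Localization S →ₗ[ℂ] (Localization S ⧸ m) := (Ideal.Quotient.mkₐ ℂ m).toLinearMap
  have hπ : Function.Surjective π := Ideal.Quotient.mk_surjective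
  have hspanF : Submodule.span ℂ (π '' Set.range f) = ⊤ := by
    rw [Submodule.span_image, hspanB, Submodule.map_top, LinearMap.range_eq_top]
    exact hπ
  have hrank : Module.rank ℂ (Localization S ⧸ m) ≤ ℵ₀ := by
    have h1 : Module.rank ℂ (Localization S ⧸ m)
        = Module.rank ℂ (Submodule.span ℂ (π '' Set.range f)) := by
      rw [hspanF]; exact (rank_top ℂ _).symm
    rw [h1]
    refine (rank_span_le _).trans ?_
    have hc : (π '' Set.range f).Countable := (Set.countable_range f).image π
    exact mk_le_aleph0_iff.mpr hc.to_subtype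
  have hsurj : Function.Surjective (algebraMap ℂ (Localization S ⧸ m)) :=
    surjective_algebraMap_quot _ m hrank
  have hinj : Function.Injective (algebraMap ℂ (Localization S ⧸ m)) :=
    (algebraMap ℂ _).injective
  let e : ℂ ≃+* (Localization S ⧸ m) :=
    RingEquiv.ofBijective (algebraMap ℂ (Localization S ⧸ m)) ⟨hinj, hsurj⟩
  let χ : A →+* (Localization S ⧸ m) :=
    (Ideal.Quotient.mk m).comp (algebraMap A (Localization S))
  let ψ : A →+* ℂ := e.symm.toRingHom.comp χ
  have hψs : Function.Surjective ψ := by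
    intro c
    refine ⟨algebraMap ℂ A c, ?_⟩
    have h5 : χ (algebraMap ℂ A c) = algebraMap ℂ (Localization S ⧸ m) c := by
      simp only [χ, RingHom.comp_apply]
      rw [← IsScalarTower.algebraMap_apply ℂ A (Localization S)]
      rfl
    simp only [ψ, RingHom.comp_apply, h5]
    exact e.symm_apply_apply c
  refine ⟨RingHom.ker ψ, RingHom.ker_isMaximal_of_surjective ψ hψs, fun n hn => ?_⟩
  have hu : IsUnit (χ (a n)) := by
    have h8 := IsLocalization.map_units (M := S) (Localization S)
      ⟨a n, Submonoid.subset_closure ⟨n, rfl⟩⟩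
    exact h8.map (Ideal.Quotient.mk m)
  have hz : χ (a n) = 0 := by
    have h6 : ψ (a n) = 0 := hn
    have h7 := congrArg e h6
    simpa [ψ, map_zero] using h7
  exact hu.ne_zero hz

/-- The maximal spectrum of a finitely generated ℂ-algebra that is an integral domain
is not the union of countably many proper Zariski-closed subsets: if countably many
closed subsets cover it, one of them is everything.  (Key uncountability fact used in
Lemmas 2.1, 2.2 and 2.3 of the paper.) -/
theorem maximalSpectrum_not_countable_union_of_proper_closed
    (A : Type*) [CommRing A] [IsDomain A] [Algebra ℂ A] [Algebra.FiniteType ℂ A]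
    (Z : ℕ → Set (MaximalSpectrum A))
    (hclosed : ∀ n, IsClosed (Z n))
    (hcover : (⋃ n, Z n) = Set.univ) :
    ∃ n, Z n = Set.univ := by
  classical
  by_contra hne
  push_neg at hne
  -- each Z n is the preimage of a zero locus
  have hZ : ∀ n, ∃ s : Set A,
      Z n = MaximalSpectrum.toPrimeSpectrum ⁻¹' PrimeSpectrum.zeroLocus s := by
    intro n
    obtain ⟨C, hC, hCZ⟩ := isClosed_induced_iff.mp (hclosed n)
    obtain ⟨s, rfl⟩ := (PrimeSpectrum.isClosed_iff_zeroLocus C).mp hC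
    exact ⟨s, hCZ.symm⟩
  choose sets hsets using hZ
  -- pick a nonzero element of each ideal of definition
  have hpick : ∀ n, ∃ x : A, x ∈ sets n ∧ x ≠ 0 := by
    intro n
    have : Z n ≠ Set.univ := hne n
    obtain ⟨M, hM⟩ := Set.ne_univ_iff_exists_notMem _ |>.mp this
    rw [hsets n] at hM
    simp only [Set.mem_preimage, PrimeSpectrum.mem_zeroLocus, Set.not_subset] at hM
    obtain ⟨x, hx, hxM⟩ := hM
    refine ⟨x, hx, fun h => hxM ?_⟩
    rw [h]
    exact (M.asIdeal).zero_mem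
  choose a hamem hane using hpick
  obtain ⟨M, hMmax, hMav⟩ := exists_maximal_avoiding A a hane
  have hMmem : (⟨M, hMmax⟩ : MaximalSpectrum A) ∈ ⋃ n, Z n := hcover ▸ Set.mem_univ _
  obtain ⟨_, ⟨n, rfl⟩, hn⟩ := hMmem
  have hn' : ({ asIdeal := M, isMaximal := hMmax } : MaximalSpectrum A) ∈
      MaximalSpectrum.toPrimeSpectrum ⁻¹' PrimeSpectrum.zeroLocus (sets n) := (hsets n) ▸ hn
  exact hMav n (hn' (hamem n))
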